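/- Suppose R₁ and R₂ are regular dihedral permutation groups acting on a finite set Ω, and their cyclic subgroups of index 2 (which act semiregularly with two orbits on Ω) are equal as permutation groups. Then R₁ = R₂. -/

import Mathlib

open Subgroup DihedralGroup Equiv

/-- In a type with two elements, two elements differing from a common third are equal. -/
lemma card_two_aux {α : Type*} (h : Nat.card α = 2) {a b c : α}
    (hb : b ≠ a) (hc : c ≠ a) : b = c := by
  obtain ⟨x, y, hxy, hU⟩ := Nat.card_eq_two_iff.mp h
  have hmem : ∀ z : α, z = x ∨ z = y := by
    intro z
    have : z ∈ ({x, y} : Set α) := hU ▸ Set.mem_univ z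
    simpa using this
  rcases hmem a with rfl | rfl <;> rcases hmem b with rfl | rfl <;>
    rcases hmem c with rfl | rfl <;> tauto

/-- The rotation subgroup of the dihedral group. -/
def rotSubgroup (k : ℕ) : Subgroup (DihedralGroup k) where
  carrier := {x | ∃ i, x = DihedralGroup.r i}
  one_mem' := ⟨0, DihedralGroup.one_def⟩
  mul_mem' := by
    rintro _ _ ⟨i, rfl⟩ ⟨j, rfl⟩
    exact ⟨i + j, (DihedralGroup.r_mul_r i j).symm⟩
  inv_mem' := by
    rintro _ ⟨i, rfl⟩
    refine ⟨-i, ?_⟩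
    rw [eq_comm, eq_inv_iff_mul_eq_one, DihedralGroup.r_mul_r]
    simp

lemma r_inv' {k : ℕ} (i : ZMod k) : (DihedralGroup.r i)⁻¹ = DihedralGroup.r (-i) :=
  inv_eq_of_mul_eq_one_right (by rw [DihedralGroup.r_mul_r, add_neg_cancel]; exact DihedralGroup.one_def.symm)

lemma sr_inv' {k : ℕ} (i : ZMod k) : (DihedralGroup.sr i)⁻¹ = DihedralGroup.sr i :=
  inv_eq_of_mul_eq_one_right (by rw [DihedralGroup.sr_mul_sr, sub_self]; exact DihedralGroup.one_def.symm)

lemma mem_rotSubgroup_iff {k : ℕ} (x : DihedralGroup k) :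
    x ∈ rotSubgroup k ↔ ∃ i, x = DihedralGroup.r i := Iff.rfl

lemma card_rotSubgroup (k : ℕ) : Nat.card (rotSubgroup k) = k := by
  have e : ZMod k ≃ rotSubgroup k :=
    { toFun := fun i => ⟨DihedralGroup.r i, ⟨i, rfl⟩⟩
      invFun := fun x => x.2.choose
      left_inv := by
        intro i
        have : DihedralGroup.r (n := k) i = DihedralGroup.r ((⟨DihedralGroup.r i, ⟨i, rfl⟩⟩ :
            rotSubgroup k).2.choose) := (⟨DihedralGroup.r i, ⟨i, rfl⟩⟩ :
            rotSubgroup k).2.choose_spec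
        exact (DihedralGroup.r.injEq _ _ ▸ this).symm
      right_inv := by
        rintro ⟨x, hx⟩
        simp only [Subtype.mk.injEq]
        exact Subtype.ext hx.choose_spec.symm }
  rw [← Nat.card_congr e, Nat.card_zmod]

/-- A cyclic index-2 subgroup of a dihedral group (k ≥ 3) is the rotation subgroup. -/
lemma dihedral_structure {k : ℕ} (hk : 3 ≤ k) (H : Subgroup (DihedralGroup k))
    (hcyc : IsCyclic H) (hidx : H.index = 2) : H = rotSubgroup k := by
  haveI : NeZero k := ⟨by omega⟩
  have hcardG : Nat.card (DihedralGroup k) = 2 * k := DihedralGroup.nat_card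
  have hcardH : Nat.card H = k := by
    have := Subgroup.card_mul_index H
    rw [hidx, hcardG] at this
    omega
  obtain ⟨⟨g, hgH⟩, hgen⟩ := hcyc
  have hHzp : H = Subgroup.zpowers g := by
    apply le_antisymm
    · intro x hx
      obtain ⟨n, hn⟩ := hgen ⟨x, hx⟩
      exact ⟨n, congrArg Subtype.val hn⟩
    · exact (Subgroup.zpowers_le).mpr hgH
  rcases g with i | i
  · -- rotation generator
    have hle : H ≤ rotSubgroup k := by
      rw [hHzp]
      exact (Subgroup.zpowers_le).mpr ⟨i, rfl⟩
    have hrotidx : (rotSubgroup k).index = 2 := by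
      have h := Subgroup.card_mul_index (rotSubgroup k)
      rw [card_rotSubgroup, hcardG, mul_comm 2 k] at h
      exact Nat.eq_of_mul_eq_mul_left (by omega) h
    have hrel : H.relIndex (rotSubgroup k) = 1 := by
      have := Subgroup.relIndex_mul_index hle
      rw [hidx, hrotidx] at this
      omega
    exact le_antisymm hle (Subgroup.relIndex_eq_one.mp hrel)
  · -- reflection generator: contradiction
    exfalso
    have : Nat.card H = 2 := by
      rw [hHzp, Nat.card_zpowers, DihedralGroup.orderOf_sr]
    omega

/-- Structure of elements outside `C` in a regular dihedral subgroup. -/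
lemma outside_struct {Ω : Type*} {R C : Subgroup (Equiv.Perm Ω)} {k : ℕ} (hk : 3 ≤ k)
    (hC : C ≤ R) (e : R ≃* DihedralGroup k) (hidx : C.relIndex R = 2)
    (hcyc : IsCyclic C) :
    ∀ x : Equiv.Perm Ω, x ∈ R → x ∉ C →
      (x * x = 1 ∧ ∀ c ∈ C, x * c * x⁻¹ = c⁻¹) := by
  set H : Subgroup (DihedralGroup k) := (C.subgroupOf R).map e.toMonoidHom with hH
  have hHrot : H = rotSubgroup k := by
    apply dihedral_structure hk
    · -- cyclic
      have h1 : Function.Surjective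
          ((e.toMonoidHom.domRestrict (C.subgroupOf R)).codRestrict H
            (fun x => Subgroup.mem_map_of_mem _ x.2)) := by
        rintro ⟨y, hy⟩
        obtain ⟨x, hx, rfl⟩ := hy
        exact ⟨⟨x, hx⟩, rfl⟩
      haveI : IsCyclic (C.subgroupOf R) :=
        isCyclic_of_surjective (Subgroup.subgroupOfEquivOfLe hC).symm.toMonoidHom
          (Subgroup.subgroupOfEquivOfLe hC).symm.surjective
      exact isCyclic_of_surjective _ h1
    · -- index
      rw [hH, Subgroup.map_equiv_eq_comap_symm' e (C.subgroupOf R),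
        Subgroup.index_comap_of_surjective _ e.symm.surjective]
      exact hidx
  intro x hxR hxC
  set x' : R := ⟨x, hxR⟩
  have hx'H : e x' ∉ H := by
    intro hmem
    rw [hH] at hmem
    obtain ⟨z, hz, hze⟩ := hmem
    have : z = x' := e.injective hze
    subst this
    exact hxC (Subgroup.mem_subgroupOf.mp hz)
  obtain ⟨i, hi⟩ : ∃ i, e x' = DihedralGroup.sr i := by
    rcases hex : e x' with j | j
    · exact absurd (hHrot ▸ ⟨j, rfl⟩) (hex ▸ hx'H)
    · exact ⟨j, rfl⟩
  constructor
  · have : x' * x' = 1 := by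
      apply e.injective
      rw [map_mul, hi, map_one, DihedralGroup.sr_mul_sr]
      simp
    have := congrArg Subtype.val this
    simpa using this
  · intro c hc
    set c' : R := ⟨c, hC hc⟩
    have hc'H : e c' ∈ H := by
      rw [hH]
      exact Subgroup.mem_map_of_mem _ (Subgroup.mem_subgroupOf.mpr hc)
    have hc'rot : e c' ∈ rotSubgroup k := hHrot ▸ hc'H
    obtain ⟨b, hb⟩ : ∃ b, e c' = DihedralGroup.r b := hc'rot
    have key : x' * c' * x'⁻¹ = c'⁻¹ := by
      apply e.injective
      rw [map_mul, map_mul, map_inv, map_inv, hi, hb,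
        DihedralGroup.sr_mul_r, sr_inv', DihedralGroup.sr_mul_sr, r_inv']
      congr 1
      ring
    have := congrArg Subtype.val key
    simpa using this

/-- Index-2 coset fact. -/
lemma coset_aux {G : Type*} [Group G] {R C : Subgroup G}
    (hidx : C.relIndex R = 2) {a b : G} (ha : a ∈ R) (hb : b ∈ R)
    (ha' : a ∉ C) (hb' : b ∉ C) : a⁻¹ * b ∈ C := by
  have hcard : Nat.card (↥R ⧸ C.subgroupOf R) = 2 := by
    rw [← Subgroup.index_eq_card]; exact hidx
  set a' : R := ⟨a, ha⟩
  set b' : R := ⟨b, hb⟩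
  have h1 : (QuotientGroup.mk a' : ↥R ⧸ C.subgroupOf R) ≠ QuotientGroup.mk 1 := by
    intro h
    rw [QuotientGroup.eq] at h
    rw [mul_one, Subgroup.mem_subgroupOf] at h
    exact ha' (by simpa using inv_mem h)
  have h2 : (QuotientGroup.mk b' : ↥R ⧸ C.subgroupOf R) ≠ QuotientGroup.mk 1 := by
    intro h
    rw [QuotientGroup.eq] at h
    rw [mul_one, Subgroup.mem_subgroupOf] at h
    exact hb' (by simpa using inv_mem h)
  have h3 := card_two_aux hcard h1 h2
  rw [QuotientGroup.eq, Subgroup.mem_subgroupOf] at h3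
  simpa using h3

/-- An element of a regular subgroup `R` outside `C` moves every point to a
different `C`-orbit. -/
lemma not_in_orbit {Ω : Type*} {R C : Subgroup (Equiv.Perm Ω)} (hC : C ≤ R)
    (hreg : ∀ x y : Ω, ∃! g : R, (g : Equiv.Perm Ω) x = y)
    {g : Equiv.Perm Ω} (hgR : g ∈ R) (hgC : g ∉ C) (z : Ω) :
    (Quotient.mk'' (g z) : Quotient (MulAction.orbitRel C Ω)) ≠ Quotient.mk'' z := by
  intro h
  rw [Quotient.eq''] at h
  have h' : g z ∈ MulAction.orbit C z := (MulAction.orbitRel_apply).mp h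
  obtain ⟨c, hc⟩ := MulAction.mem_orbit_iff.mp h'
  have hc' : (c : Equiv.Perm Ω) z = g z := hc
  have hmem : (↑c)⁻¹ * g ∈ R := mul_mem (inv_mem (hC c.2)) hgR
  have hfix : ((↑c)⁻¹ * g) z = z := by
    rw [Equiv.Perm.mul_apply, ← hc']; exact Equiv.symm_apply_apply _ _
  obtain ⟨w, hw, hu⟩ := hreg z z
  have e1 : (⟨(↑c)⁻¹ * g, hmem⟩ : R) = w := hu _ hfix
  have e2 : (1 : R) = w := hu 1 (by simp)
  have : (↑c : Equiv.Perm Ω)⁻¹ * g = 1 := by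
    have := e1.trans e2.symm
    simpa using congrArg Subtype.val this
  have : g = (↑c : Equiv.Perm Ω) := by
    rw [inv_mul_eq_one] at this
    exact this.symm
  exact hgC (this ▸ c.2)

/-- Two regular dihedral permutation groups on a finite set Ω whose cyclic
index-2 subgroups (acting semiregularly with two orbits) coincide, are equal. -/
theorem stmt_3 {Ω : Type*} [Fintype Ω]
    (R₁ R₂ C : Subgroup (Equiv.Perm Ω)) (k : ℕ) (hk : 3 ≤ k)
    (hreg₁ : ∀ x y : Ω, ∃! g : R₁, (g : Equiv.Perm Ω) x = y)
    (hreg₂ : ∀ x y : Ω, ∃! g : R₂, (g : Equiv.Perm Ω) x = y)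
    (hdih₁ : Nonempty (R₁ ≃* DihedralGroup k))
    (hdih₂ : Nonempty (R₂ ≃* DihedralGroup k))
    (hC₁ : C ≤ R₁) (hC₂ : C ≤ R₂) (hcyc : IsCyclic C)
    (hidx₁ : C.relIndex R₁ = 2) (hidx₂ : C.relIndex R₂ = 2)
    (hsemi : ∀ g ∈ C, g ≠ 1 → ∀ x : Ω, g x ≠ x)
    (horb : Nat.card (Quotient (MulAction.orbitRel C Ω)) = 2) :
    R₁ = R₂ := by
  obtain ⟨e₁⟩ := hdih₁
  obtain ⟨e₂⟩ := hdih₂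
  have hout₁ := outside_struct hk hC₁ e₁ hidx₁ hcyc
  have hout₂ := outside_struct hk hC₂ e₂ hidx₂ hcyc
  -- pick elements outside C
  have hex : ∀ (R : Subgroup (Equiv.Perm Ω)), C.relIndex R = 2 → ∃ x, x ∈ R ∧ x ∉ C := by
    intro R hidx
    by_contra h
    push_neg at h
    have : C.relIndex R = 1 := Subgroup.relIndex_eq_one.mpr (fun x hx => h x hx)
    omega
  obtain ⟨t, htR, htC⟩ := hex R₁ hidx₁
  obtain ⟨s, hsR, hsC⟩ := hex R₂ hidx₂
  obtain ⟨ht2, htinv⟩ := hout₁ t htR htC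
  obtain ⟨hs2, hsinv⟩ := hout₂ s hsR hsC
  have htinv' : t⁻¹ = t := inv_eq_of_mul_eq_one_right ht2
  have hsinv' : s⁻¹ = s := inv_eq_of_mul_eq_one_right hs2
  -- commutativity inside C
  have hcomm : ∀ a b : Equiv.Perm Ω, a ∈ C → b ∈ C → a * b = b * a := by
    intro a b ha hb
    letI := hcyc.commGroup
    have : (⟨a, ha⟩ : C) * ⟨b, hb⟩ = ⟨b, hb⟩ * ⟨a, ha⟩ := mul_comm _ _
    exact congrArg Subtype.val this
  -- t*s centralizes C
  have hcent : ∀ c : Equiv.Perm Ω, c ∈ C → (t * s) * c = c * (t * s) := by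
    intro c hc
    have h₁ := hsinv c hc
    have h₂ := htinv c⁻¹ (inv_mem hc)
    have e1 : s * c = c⁻¹ * s := by
      have : s * c * s⁻¹ * s = c⁻¹ * s := by rw [h₁]
      rw [← this]; group
    have e2 : t * c⁻¹ = c * t := by
      rw [inv_inv] at h₂
      have : t * c⁻¹ * t⁻¹ * t = c * t := by rw [h₂]
      rw [← this]; group
    calc (t * s) * c = t * (s * c) := by group
      _ = t * (c⁻¹ * s) := by rw [e1]
      _ = (t * c⁻¹) * s := by group
      _ = (c * t) * s := by rw [e2]
      _ = c * (t * s) := by group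
  -- orbit bookkeeping
  have hQne : Nonempty (Quotient (MulAction.orbitRel C Ω)) := by
    have : 0 < Nat.card (Quotient (MulAction.orbitRel C Ω)) := by omega
    exact (Nat.card_pos_iff.mp this).1
  obtain ⟨q⟩ := hQne
  set ω : Ω := q.out with hω
  have horbiff : ∀ x y : Ω,
      (Quotient.mk'' x : Quotient (MulAction.orbitRel C Ω)) = Quotient.mk'' y ↔
        ∃ c : C, (c : Equiv.Perm Ω) y = x := by
    intro x y
    rw [Quotient.eq'']
    have : MulAction.orbitRel C Ω x y ↔ x ∈ MulAction.orbit C y :=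
      MulAction.orbitRel_apply
    rw [this, MulAction.mem_orbit_iff]
    rfl
  have h1 : (Quotient.mk'' (s ω) : Quotient (MulAction.orbitRel C Ω)) ≠ Quotient.mk'' ω :=
    not_in_orbit hC₂ hreg₂ hsR hsC ω
  have h2 : (Quotient.mk'' (t (s ω)) : Quotient (MulAction.orbitRel C Ω)) ≠
      Quotient.mk'' (s ω) :=
    not_in_orbit hC₁ hreg₁ htR htC (s ω)
  have h3 : (Quotient.mk'' ((t * s) ω) : Quotient (MulAction.orbitRel C Ω)) =
      Quotient.mk'' ω := by
    rw [Equiv.Perm.mul_apply]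
    exact (card_two_aux horb h1.symm h2).symm
  obtain ⟨c₁, hc₁⟩ := (horbiff ((t * s) ω) ω).mp h3
  -- (t*s)⁻¹ ω = c₁⁻¹ ω
  have hcent₁ : (t * s) * ↑c₁ = ↑c₁ * (t * s) := hcent ↑c₁ c₁.2
  have hinvpt : (t * s)⁻¹ ω = (↑c₁ : Equiv.Perm Ω)⁻¹ ω := by
    have hc : (↑c₁ : Equiv.Perm Ω) ((t * s)⁻¹ ω) = ω := by
      have e : (↑c₁ : Equiv.Perm Ω) * (t * s)⁻¹ = (t * s)⁻¹ * ↑c₁ := by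
        have := hcent₁
        calc (↑c₁ : Equiv.Perm Ω) * (t * s)⁻¹
            = (t * s)⁻¹ * ((t * s) * ↑c₁) * (t * s)⁻¹ := by group
          _ = (t * s)⁻¹ * (↑c₁ * (t * s)) * (t * s)⁻¹ := by rw [hcent₁]
          _ = (t * s)⁻¹ * ↑c₁ := by group
      calc (↑c₁ : Equiv.Perm Ω) ((t * s)⁻¹ ω)
          = ((↑c₁ : Equiv.Perm Ω) * (t * s)⁻¹) ω := (Equiv.Perm.mul_apply _ _ _).symm
        _ = ((t * s)⁻¹ * ↑c₁) ω := by rw [e]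
        _ = (t * s)⁻¹ ((↑c₁ : Equiv.Perm Ω) ω) := Equiv.Perm.mul_apply _ _ _
        _ = (t * s)⁻¹ ((t * s) ω) := by rw [hc₁]
        _ = ω := Equiv.symm_apply_apply _ _
    calc (t * s)⁻¹ ω = (↑c₁ : Equiv.Perm Ω)⁻¹ ((↑c₁ : Equiv.Perm Ω) ((t * s)⁻¹ ω)) :=
          (Equiv.symm_apply_apply _ _).symm
      _ = (↑c₁ : Equiv.Perm Ω)⁻¹ ω := by rw [hc]
  -- pointwise equality
  have hupt : ∀ x : Ω, (t * s) x = (↑c₁ : Equiv.Perm Ω) x := by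
    intro x
    by_cases hx : (Quotient.mk'' x : Quotient (MulAction.orbitRel C Ω)) = Quotient.mk'' ω
    · obtain ⟨c, hc⟩ := (horbiff x ω).mp hx
      rw [← hc]
      calc (t * s) ((↑c : Equiv.Perm Ω) ω) = ((t * s) * ↑c) ω := (Equiv.Perm.mul_apply _ _ _).symm
        _ = (↑c * (t * s)) ω := by rw [hcent ↑c c.2]
        _ = (↑c : Equiv.Perm Ω) ((t * s) ω) := Equiv.Perm.mul_apply _ _ _
        _ = (↑c : Equiv.Perm Ω) ((↑c₁ : Equiv.Perm Ω) ω) := by rw [hc₁]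
        _ = (↑c * ↑c₁ : Equiv.Perm Ω) ω := (Equiv.Perm.mul_apply _ _ _).symm
        _ = (↑c₁ * ↑c : Equiv.Perm Ω) ω := by rw [hcomm _ _ c.2 c₁.2]
        _ = (↑c₁ : Equiv.Perm Ω) ((↑c : Equiv.Perm Ω) ω) := Equiv.Perm.mul_apply _ _ _
    · have h4 : (Quotient.mk'' (t ω) : Quotient (MulAction.orbitRel C Ω)) ≠ Quotient.mk'' ω :=
        not_in_orbit hC₁ hreg₁ htR htC ω
      have h5 := card_two_aux horb hx h4
      obtain ⟨c, hc⟩ := (horbiff x (t ω)).mp h5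
      rw [← hc]
      have hstep : t ((↑c₁ : Equiv.Perm Ω)⁻¹ ω) = (↑c₁ : Equiv.Perm Ω) (t ω) := by
        have h₂ := htinv (↑c₁)⁻¹ (inv_mem c₁.2)
        rw [inv_inv] at h₂
        have e2 : t * (↑c₁ : Equiv.Perm Ω)⁻¹ = ↑c₁ * t := by
          have : t * (↑c₁ : Equiv.Perm Ω)⁻¹ * t⁻¹ * t = ↑c₁ * t := by rw [h₂]
          rw [← this]; group
        calc t ((↑c₁ : Equiv.Perm Ω)⁻¹ ω) = (t * (↑c₁ : Equiv.Perm Ω)⁻¹) ω :=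
              (Equiv.Perm.mul_apply _ _ _).symm
          _ = (↑c₁ * t : Equiv.Perm Ω) ω := by rw [e2]
          _ = (↑c₁ : Equiv.Perm Ω) (t ω) := Equiv.Perm.mul_apply _ _ _
      have hst : (s * t) ω = (↑c₁ : Equiv.Perm Ω)⁻¹ ω := by
        have e3 : s * t = (t * s)⁻¹ := by rw [mul_inv_rev, htinv', hsinv']
        rw [e3, hinvpt]
      calc (t * s) ((↑c : Equiv.Perm Ω) (t ω))
          = (t * s) (((↑c : Equiv.Perm Ω) * t) ω) := by simp only [Equiv.Perm.mul_apply]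
        _ = ((t * s) * (↑c * t)) ω := (Equiv.Perm.mul_apply _ _ _).symm
        _ = ((↑c * (t * s)) * t) ω := by rw [← mul_assoc, hcent ↑c c.2]
        _ = (↑c * (t * (s * t))) ω := by group
        _ = (↑c : Equiv.Perm Ω) (t ((s * t) ω)) := by
              rw [Equiv.Perm.mul_apply, Equiv.Perm.mul_apply]
        _ = (↑c : Equiv.Perm Ω) (t ((↑c₁ : Equiv.Perm Ω)⁻¹ ω)) := by rw [hst]
        _ = (↑c : Equiv.Perm Ω) ((↑c₁ : Equiv.Perm Ω) (t ω)) := by rw [hstep]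
        _ = ((↑c * ↑c₁ : Equiv.Perm Ω)) (t ω) := (Equiv.Perm.mul_apply _ _ _).symm
        _ = ((↑c₁ * ↑c : Equiv.Perm Ω)) (t ω) := by rw [hcomm _ _ c.2 c₁.2]
        _ = (↑c₁ : Equiv.Perm Ω) ((↑c : Equiv.Perm Ω) (t ω)) := Equiv.Perm.mul_apply _ _ _
  have hu : t * s = (↑c₁ : Equiv.Perm Ω) := Equiv.ext hupt
  have huC : t * s ∈ C := by rw [hu]; exact c₁.2
  have hsR₁ : s ∈ R₁ := by
    have h : t * (t * s) = s := by rw [← mul_assoc, ht2, one_mul]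
    rw [← h]
    exact mul_mem htR (hC₁ huC)
  have htR₂ : t ∈ R₂ := by
    have h : (t * s) * s = t := by rw [mul_assoc, hs2, mul_one]
    rw [← h]
    exact mul_mem (hC₂ huC) hsR
  apply le_antisymm
  · intro g hg
    by_cases hgC : g ∈ C
    · exact hC₂ hgC
    · have hmem : t⁻¹ * g ∈ C := coset_aux hidx₁ htR hg htC hgC
      have : g = t * (t⁻¹ * g) := by group
      rw [this]
      exact mul_mem htR₂ (hC₂ hmem)
  · intro g hg
    by_cases hgC : g ∈ C
    · exact hC₁ hgC
    · have hmem : s⁻¹ * g ∈ C := coset_aux hidx₂ hsR hg hsC hgC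
      have : g = s * (s⁻¹ * g) := by group
      rw [this]
      exact mul_mem hsR₁ (hC₁ hmem)
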